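/- Let n ≥ 1 and let r₊ > 0, a ≥ 0 satisfy the subextremality condition r₊²(n + (n+1)r₊²) − a²(n+1)(1 + r₊²)² ≥ 0. Then a² < 1 and r₊²(1 − a²) − a² > 0. -/
import Mathlib

/-- Subextremality of Myers–Perry–AdS: if `r₊²(n + (n+1)r₊²) − a²(n+1)(1+r₊²)² ≥ 0`
with `r₊ > 0` and `a ≥ 0`, then `a² < 1` and `r₊²(1 − a²) − a² > 0`. -/
theorem myersPerryAdS_subextremal (n : ℕ) (hn : 1 ≤ n) (rp a : ℝ)
    (hrp : 0 < rp) (ha : 0 ≤ a)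
    (hsub : 0 ≤ rp ^ 2 * ((n : ℝ) + ((n : ℝ) + 1) * rp ^ 2)
        - a ^ 2 * ((n : ℝ) + 1) * (1 + rp ^ 2) ^ 2) :
    a ^ 2 < 1 ∧ 0 < rp ^ 2 * (1 - a ^ 2) - a ^ 2 := by
  have hn1 : (1 : ℝ) ≤ (n : ℝ) := by exact_mod_cast hn
  have hr2 : 0 < rp ^ 2 := by positivity
  -- key: a²(1+rp²) < rp²
  have key : a ^ 2 * (1 + rp ^ 2) < rp ^ 2 := by
    by_contra h
    push_neg at h
    have h2 := mul_le_mul_of_nonneg_left h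
      (show (0:ℝ) ≤ ((n : ℝ) + 1) * (1 + rp ^ 2) by positivity)
    nlinarith
  constructor
  · nlinarith
  · nlinarith
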